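/- (Strict complementary slackness.) Suppose both the primal linear program (P_b) and its dual (D_b) have optimal solutions. Then there exist an optimal solution x* of (P_b) and an optimal solution λ* of (D_b) such that for every index j ∈ {1,…,d}, either x*_j > 0 or (Aᵀλ*)_j < c_j. -/

import Mathlib

open Matrix

noncomputable section

variable {m d : ℕ}

/-- The primal feasible set `P(b) = {x : A x = b, x ≥ 0}`. -/
def feasSet (A : Matrix (Fin m) (Fin d) ℝ) (b : Fin m → ℝ) : Set (Fin d → ℝ) :=
  {x | A *ᵥ x = b ∧ ∀ i, 0 ≤ x i}

/-- The optimality set `OPT(b)` of the primal program `(P_b)`. -/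
def optSet (A : Matrix (Fin m) (Fin d) ℝ) (b : Fin m → ℝ) (c : Fin d → ℝ) :
    Set (Fin d → ℝ) :=
  {x | x ∈ feasSet A b ∧ ∀ y ∈ feasSet A b, c ⬝ᵥ x ≤ c ⬝ᵥ y}

/-- The dual feasible set `{λ : Aᵀ λ ≤ c}`. -/
def dualFeasSet (A : Matrix (Fin m) (Fin d) ℝ) (c : Fin d → ℝ) : Set (Fin m → ℝ) :=
  {l | ∀ j, (Aᵀ *ᵥ l) j ≤ c j}

/-- The set of optimal solutions of the dual program `(D_b)`. -/
def dualOptSet (A : Matrix (Fin m) (Fin d) ℝ) (b : Fin m → ℝ) (c : Fin d → ℝ) :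
    Set (Fin m → ℝ) :=
  {l | l ∈ dualFeasSet A c ∧ ∀ mu ∈ dualFeasSet A c, b ⬝ᵥ mu ≤ b ⬝ᵥ l}

/-- The submatrix `A_I` of the columns indexed by `I`, where the subset
`I ⊆ {1,…,d}` of cardinality `m` is encoded by the strictly monotone
enumeration `e : Fin m → Fin d` of its elements. -/
def subMat (A : Matrix (Fin m) (Fin d) ℝ) (e : Fin m → Fin d) :
    Matrix (Fin m) (Fin m) ℝ :=
  A.submatrix id e

/-- `e` encodes a basis: a subset of size `m` of the columns (strictly monotone
enumeration) whose corresponding submatrix `A_I` is invertible. -/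
def IsBasis (A : Matrix (Fin m) (Fin d) ℝ) (e : Fin m → Fin d) : Prop :=
  StrictMono e ∧ IsUnit (subMat A e).det

/-- The primal basic solution `x(I, v)`: equal to `(A_I)⁻¹ v` on the coordinates
in `I` and `0` elsewhere. -/
def basicSol (A : Matrix (Fin m) (Fin d) ℝ) (e : Fin m → Fin d) (v : Fin m → ℝ) :
    Fin d → ℝ :=
  fun i => ∑ j, if e j = i then ((subMat A e)⁻¹ *ᵥ v) j else 0

/-- The dual basic solution `λ(I) = (A_I)⁻ᵀ c_I`. -/
def dualSol (A : Matrix (Fin m) (Fin d) ℝ) (c : Fin d → ℝ) (e : Fin m → Fin d) :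
    Fin m → ℝ :=
  ((subMat A e)ᵀ)⁻¹ *ᵥ fun j => c (e j)

/-- `I` is a dual feasible basis: `Aᵀ λ(I) ≤ c`. -/
def DualFeasibleBasis (A : Matrix (Fin m) (Fin d) ℝ) (c : Fin d → ℝ)
    (e : Fin m → Fin d) : Prop :=
  IsBasis A e ∧ ∀ j, (Aᵀ *ᵥ dualSol A c e) j ≤ c j

/-- `I` is a primal feasible basis for `(P_b)`: `x(I,b) ≥ 0`. -/
def PrimalFeasibleBasis (A : Matrix (Fin m) (Fin d) ℝ) (b : Fin m → ℝ)
    (e : Fin m → Fin d) : Prop :=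
  IsBasis A e ∧ ∀ i, 0 ≤ basicSol A e b i

namespace SCS


open RealInnerProductSpace

variable {ι : Type*} [Fintype ι]

section Carath

variable {E : Type*} [AddCommGroup E] [Module ℝ E]

lemma carath_aux (v : ι → E) : ∀ (N : ℕ) (t : ι → ℝ),
    (Finset.univ.filter (fun i => t i ≠ 0)).card ≤ N → (∀ i, 0 ≤ t i) →
    ∃ s : ι → ℝ, (∀ i, 0 ≤ s i) ∧ ∑ i, s i • v i = ∑ i, t i • v i ∧
      LinearIndependent ℝ (fun i : {i // s i ≠ 0} => v i) := by
  classical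
  intro N
  induction N with
  | zero =>
    intro t hcard ht
    have hfe : (Finset.univ.filter (fun i => t i ≠ 0)) = ∅ :=
      Finset.card_eq_zero.mp (Nat.le_zero.mp hcard)
    have ht0 : ∀ i, t i = 0 := by
      intro i
      by_contra h
      have : i ∈ Finset.univ.filter (fun i => t i ≠ 0) := by simp [h]
      simp [hfe] at this
    have : IsEmpty {i // t i ≠ 0} := ⟨fun i => i.2 (ht0 i.1)⟩
    exact ⟨t, ht, rfl, linearIndependent_empty_type⟩
  | succ N ih =>
    intro t hcard ht
    by_cases hli : LinearIndependent ℝ (fun i : {i // t i ≠ 0} => v i)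
    · exact ⟨t, ht, rfl, hli⟩
    obtain ⟨g, hgsum, i₀, hi₀⟩ := Fintype.not_linearIndependent_iff.mp hli
    set a : ι → ℝ := fun i => if h : t i ≠ 0 then g ⟨i, h⟩ else 0 with ha
    have hasupp : ∀ i, t i = 0 → a i = 0 := by
      intro i h; simp [ha, h]
    have hasum : ∑ i, a i • v i = 0 := by
      have h1 : ∑ i ∈ Finset.univ.filter (fun i => t i ≠ 0), a i • v i = ∑ i, a i • v i :=
        Finset.sum_filter_of_ne (by
          intro i _ h
          by_contra hp
          rw [hasupp i hp, zero_smul] at h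
          exact h rfl)
      have h2 : ∑ i ∈ Finset.univ.filter (fun i => t i ≠ 0), a i • v i
          = ∑ i : {i // t i ≠ 0}, a i.1 • v i.1 :=
        Finset.sum_subtype _ (by simp) _
      have h3 : ∑ i : {i // t i ≠ 0}, a i.1 • v i.1 = ∑ i : {i // t i ≠ 0}, g i • v i.1 := by
        refine Finset.sum_congr rfl fun i _ => ?_
        have : a i.1 = g i := by simp [ha, i.2]
        rw [this]
      rw [← h1, h2, h3, hgsum]
    have key : ∀ aa : ι → ℝ, (∑ i, aa i • v i = 0) → (∀ i, t i = 0 → aa i = 0) →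
        (∃ i, 0 < aa i) →
        ∃ s : ι → ℝ, (∀ i, 0 ≤ s i) ∧ ∑ i, s i • v i = ∑ i, t i • v i ∧
          LinearIndependent ℝ (fun i : {i // s i ≠ 0} => v i) := by
      rintro aa hsum hsupp ⟨i₁, hi₁⟩
      set S := Finset.univ.filter (fun i => 0 < aa i) with hSdef
      have hS : S.Nonempty := ⟨i₁, by simp [hSdef, hi₁]⟩
      obtain ⟨i₂, hi₂S, hmin⟩ := S.exists_min_image (fun i => t i / aa i) hS
      have hai₂ : 0 < aa i₂ := by simpa [hSdef] using hi₂S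
      set θ := t i₂ / aa i₂ with hθ
      have hθ0 : 0 ≤ θ := div_nonneg (ht i₂) hai₂.le
      set s : ι → ℝ := fun i => t i - θ * aa i with hs
      have hs0 : ∀ i, 0 ≤ s i := by
        intro i
        by_cases hpos : 0 < aa i
        · have h4 : θ ≤ t i / aa i := hmin i (by simp [hSdef, hpos])
          have := (le_div_iff₀ hpos).mp h4
          simp only [hs]; linarith
        · have h5 : aa i ≤ 0 := not_lt.mp hpos
          have := ht i
          have : θ * aa i ≤ 0 := mul_nonpos_of_nonneg_of_nonpos hθ0 h5
          simp only [hs]; linarith [ht i]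
      have hssum : ∑ i, s i • v i = ∑ i, t i • v i := by
        simp only [hs, sub_smul, Finset.sum_sub_distrib]
        have hone : ∑ x, (θ * aa x) • v x = θ • ∑ x, aa x • v x := by
          rw [Finset.smul_sum]
          exact Finset.sum_congr rfl fun i _ => mul_smul θ (aa i) (v i)
        rw [hone, hsum, smul_zero, sub_zero]
      have hsi₂ : s i₂ = 0 := by
        simp only [hs, hθ]
        field_simp
        ring
      have hsub : Finset.univ.filter (fun i => s i ≠ 0) ⊂
          Finset.univ.filter (fun i => t i ≠ 0) := by
        refine ⟨fun i hi => ?_, fun hcon => ?_⟩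
        · simp only [Finset.mem_filter, Finset.mem_univ, true_and] at hi ⊢
          intro ht0
          exact hi (by simp only [hs]; rw [ht0, hsupp i ht0]; ring)
        · have ht2 : t i₂ ≠ 0 := by
            intro h
            rw [hsupp i₂ h] at hai₂
            exact lt_irrefl 0 hai₂
          have := hcon (by simp [ht2] : i₂ ∈ Finset.univ.filter (fun i => t i ≠ 0))
          simp only [Finset.mem_filter, Finset.mem_univ, true_and] at this
          exact this hsi₂
      have hcard' : (Finset.univ.filter (fun i => s i ≠ 0)).card ≤ N := by
        have := Finset.card_lt_card hsub
        omega
      obtain ⟨s', h1, h2, h3⟩ := ih s hcard' hs0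
      exact ⟨s', h1, h2.trans hssum, h3⟩
    have hai₀ : a i₀.1 ≠ 0 := by
      have : a i₀.1 = g i₀ := by simp [ha, i₀.2]
      rw [this]; exact hi₀
    rcases hai₀.lt_or_gt with hneg | hpos
    · refine key (-a) ?_ (fun i h => by simp [hasupp i h]) ⟨i₀.1, by simpa using hneg⟩
      simp only [Pi.neg_apply, neg_smul, Finset.sum_neg_distrib, hasum, neg_zero]
    · exact key a hasum hasupp ⟨i₀.1, hpos⟩

end Carath

section Cone

variable {n : Type*} [Fintype n]

lemma isClosed_subcone (v : ι → EuclideanSpace ℝ n) (p : ι → Prop)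
    (hli : LinearIndependent ℝ (fun i : {i // p i} => v i)) :
    IsClosed {y : EuclideanSpace ℝ n |
      ∃ t : ι → ℝ, (∀ i, 0 ≤ t i) ∧ (∀ i, ¬ p i → t i = 0) ∧ y = ∑ i, t i • v i} := by
  classical
  let L : ({i // p i} → ℝ) →ₗ[ℝ] EuclideanSpace ℝ n :=
    { toFun := fun u => ∑ j, u j • v ↑j
      map_add' := fun u w => by
        simp [add_smul, Finset.sum_add_distrib]
      map_smul' := fun r u => by
        simp only [Pi.smul_apply, smul_eq_mul, RingHom.id_apply, Finset.smul_sum]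
        exact Finset.sum_congr rfl fun j _ => mul_smul r (u j) (v ↑j) }
  have hker : LinearMap.ker L = ⊥ := by
    rw [LinearMap.ker_eq_bot']
    intro u hu
    funext j
    exact Fintype.linearIndependent_iff.mp hli u hu j
  have hemb : Topology.IsClosedEmbedding L := LinearMap.isClosedEmbedding_of_injective hker
  have horth : IsClosed {u : {i // p i} → ℝ | ∀ j, 0 ≤ u j} := by
    have h : {u : {i // p i} → ℝ | ∀ j, 0 ≤ u j} = ⋂ j, {u | 0 ≤ u j} := by
      ext u; simp [Set.mem_iInter]
    rw [h]
    exact isClosed_iInter fun j => isClosed_le continuous_const (continuous_apply j)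
  have himg : {y : EuclideanSpace ℝ n |
      ∃ t : ι → ℝ, (∀ i, 0 ≤ t i) ∧ (∀ i, ¬ p i → t i = 0) ∧ y = ∑ i, t i • v i}
      = L '' {u | ∀ j, 0 ≤ u j} := by
    ext y
    constructor
    · rintro ⟨t, ht0, htsupp, rfl⟩
      refine ⟨fun j => t ↑j, fun j => ht0 _, ?_⟩
      show ∑ j : {i // p i}, t ↑j • v ↑j = ∑ i, t i • v i
      rw [← Finset.sum_subtype (Finset.univ.filter p) (by simp) (fun i => t i • v i)]
      exact Finset.sum_filter_of_ne (by
        intro i _ h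
        by_contra hp
        rw [htsupp i hp, zero_smul] at h
        exact h rfl)
    · rintro ⟨u, hu, rfl⟩
      refine ⟨fun i => if h : p i then u ⟨i, h⟩ else 0,
        fun i => by by_cases h : p i <;> simp [h, hu _], fun i hi => by simp [hi], ?_⟩
      show L u = ∑ i, (if h : p i then u ⟨i, h⟩ else 0) • v i
      rw [← Finset.sum_filter_of_ne (s := Finset.univ)
        (f := fun i => (if h : p i then u ⟨i, h⟩ else 0) • v i) (p := p)
        (by intro i _ h; by_contra hp; simp only [dif_neg hp, zero_smul] at h; exact h rfl)]
      rw [Finset.sum_subtype (p := p) (Finset.univ.filter p) (by simp)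
        (fun i => (if h : p i then u ⟨i, h⟩ else 0) • v i)]
      refine Finset.sum_congr rfl fun j _ => ?_
      rw [dif_pos j.2]
  rw [himg]
  exact hemb.isClosedMap _ horth

lemma isClosed_cone (v : ι → EuclideanSpace ℝ n) :
    IsClosed {y : EuclideanSpace ℝ n | ∃ t : ι → ℝ, (∀ i, 0 ≤ t i) ∧ y = ∑ i, t i • v i} := by
  classical
  have hrw : {y : EuclideanSpace ℝ n | ∃ t : ι → ℝ, (∀ i, 0 ≤ t i) ∧ y = ∑ i, t i • v i} =
      ⋃ (p : ι → Prop), ⋃ (_ : LinearIndependent ℝ (fun i : {i // p i} => v i)),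
        {y | ∃ t : ι → ℝ, (∀ i, 0 ≤ t i) ∧ (∀ i, ¬ p i → t i = 0) ∧ y = ∑ i, t i • v i} := by
    ext y
    simp only [Set.mem_iUnion, Set.mem_setOf_eq]
    constructor
    · rintro ⟨t, ht, rfl⟩
      obtain ⟨s, hs0, hsum, hli⟩ := carath_aux v (Finset.univ.filter (fun i => t i ≠ 0)).card
        t le_rfl ht
      exact ⟨fun i => s i ≠ 0, hli, s, hs0, fun i hi => not_not.mp hi, hsum.symm⟩
    · rintro ⟨p, hli, t, ht, _, rfl⟩
      exact ⟨t, ht, rfl⟩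
  rw [hrw]
  refine isClosed_iUnion_of_finite fun p => ?_
  rw [Set.iUnion_eq_if]
  split_ifs with h
  · exact isClosed_subcone v p h
  · exact isClosed_empty

end Cone

section Farkas

variable {n : Type*} [Fintype n] [DecidableEq ι]

/-- Farkas' lemma. -/
lemma farkas (M : Matrix n ι ℝ) (u : n → ℝ)
    (h : ¬ ∃ x : ι → ℝ, (∀ i, 0 ≤ x i) ∧ M *ᵥ x = u) :
    ∃ y : n → ℝ, (∀ i, 0 ≤ (Mᵀ *ᵥ y) i) ∧ u ⬝ᵥ y < 0 := by
  classical
  set v : ι → EuclideanSpace ℝ n := fun i => WithLp.toLp 2 (fun j => M j i) with hv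
  have hmv : ∀ x : ι → ℝ, M *ᵥ x = fun j => (∑ i, x i • v i) j := by
    intro x
    funext j
    have hsa := Finset.sum_apply (a := j) (s := Finset.univ) (g := fun i => (x i • v i : n → ℝ))
    rw [show (∑ i, x i • v i) j = ∑ i, (x i • v i : n → ℝ) j by simp [WithLp.ofLp_sum]]
    simp [Matrix.mulVec, dotProduct, hv, mul_comm]
  set K : ConvexCone ℝ (EuclideanSpace ℝ n) :=
    { carrier := {y | ∃ t : ι → ℝ, (∀ i, 0 ≤ t i) ∧ y = ∑ i, t i • v i}
      smul_mem' := by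
        rintro r hr y ⟨t, ht, rfl⟩
        exact ⟨fun i => r * t i, fun i => mul_nonneg hr.le (ht i), by
          rw [Finset.smul_sum]; exact Finset.sum_congr rfl fun i _ => (mul_smul r (t i) (v i)).symm⟩
      add_mem' := by
        rintro y ⟨t, ht, rfl⟩ z ⟨s, hs, rfl⟩
        exact ⟨fun i => t i + s i, fun i => add_nonneg (ht i) (hs i), by
          rw [← Finset.sum_add_distrib]
          exact Finset.sum_congr rfl fun i _ => (add_smul (t i) (s i) (v i)).symm⟩ } with hK
  have hne : ((K : Set (EuclideanSpace ℝ n))).Nonempty :=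
    ⟨0, ⟨fun _ => 0, fun _ => le_refl 0, by simp⟩⟩
  have hclosed : IsClosed (K : Set (EuclideanSpace ℝ n)) := isClosed_cone v
  have hu : (WithLp.toLp 2 u : EuclideanSpace ℝ n) ∉ K := by
    rintro ⟨t, ht, htu⟩
    exact h ⟨t, ht, by rw [hmv t]; exact funext fun j => (congrArg (fun w : EuclideanSpace ℝ n => WithLp.ofLp w j) htu).symm⟩
  obtain ⟨y, hy1, hy2⟩ :=
    ProperCone.hyperplane_separation' (C := ⟨K.toPointedCone ⟨fun _ => 0, fun _ => le_refl 0, by simp⟩, hclosed⟩) hu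
  refine ⟨y, fun i => ?_, ?_⟩
  · have hvi : (v i : EuclideanSpace ℝ n) ∈ K := by
      refine ⟨Pi.single i 1, fun j => by
        by_cases hji : j = i <;> simp [Pi.single_apply, hji], ?_⟩
      rw [Finset.sum_eq_single_of_mem i (Finset.mem_univ i)
        (fun b _ hb => by simp [Pi.single_apply, hb])]
      simp
    have := hy1 _ hvi
    rw [PiLp.inner_apply] at this
    simpa [Matrix.mulVec, dotProduct, hv, mul_comm] using this
  · rw [PiLp.inner_apply] at hy2
    simpa [dotProduct, mul_comm] using hy2

end Farkas

section Tucker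

variable {n : Type*} [Fintype n] [DecidableEq n]

lemma tucker_index (K : Matrix n n ℝ) (hskew : Kᵀ = -K) (i : n) :
    ∃ z : n → ℝ, (∀ a, 0 ≤ z a) ∧ (∀ a, 0 ≤ (K *ᵥ z) a) ∧ 0 < z i + (K *ᵥ z) i := by
  classical
  by_cases hc : ∃ z : n → ℝ, (∀ a, 0 ≤ z a) ∧ (∀ a, 0 ≤ (K *ᵥ z) a) ∧ 0 < z i
  · obtain ⟨z, h1, h2, h3⟩ := hc
    exact ⟨z, h1, h2, by have := h2 i; linarith⟩
  · set M : Matrix (n ⊕ Unit) (n ⊕ n) ℝ := Matrix.of fun r s =>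
      match r, s with
      | Sum.inl a, Sum.inl b => K a b
      | Sum.inl a, Sum.inr b => -(if a = b then (1:ℝ) else 0)
      | Sum.inr _, Sum.inl b => if b = i then 1 else 0
      | Sum.inr _, Sum.inr _ => 0 with hM
    set u : n ⊕ Unit → ℝ := Sum.elim 0 (fun _ => 1) with hu
    have hinf : ¬ ∃ x : n ⊕ n → ℝ, (∀ a, 0 ≤ x a) ∧ M *ᵥ x = u := by
      rintro ⟨x, hx0, hxu⟩
      set z : n → ℝ := fun a => x (Sum.inl a) with hz
      have hrow1 : ∀ a, (M *ᵥ x) (Sum.inl a) = (K *ᵥ z) a - x (Sum.inr a) := by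
        intro a
        show ∑ s, M (Sum.inl a) s * x s = _
        rw [Fintype.sum_sum_type]
        simp only [hM, Matrix.of_apply, Matrix.mulVec, dotProduct, hz,
          neg_mul, ite_mul, one_mul, zero_mul, Finset.sum_neg_distrib,
          Finset.sum_ite_eq, Finset.mem_univ, if_true]
        ring
      have hrow2 : (M *ᵥ x) (Sum.inr ()) = z i := by
        show ∑ s, M (Sum.inr ()) s * x s = _
        rw [Fintype.sum_sum_type]
        simp only [hM, Matrix.of_apply, Matrix.mulVec, hz, ite_mul, one_mul, zero_mul,
          Finset.sum_ite_eq, Finset.mem_univ, if_true]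
        simp
      apply hc
      refine ⟨z, fun a => hx0 _, fun a => ?_, ?_⟩
      · have h := congrFun hxu (Sum.inl a)
        rw [hrow1 a] at h
        simp only [hu, Sum.elim_inl, Pi.zero_apply] at h
        have := hx0 (Sum.inr a)
        linarith
      · have h := congrFun hxu (Sum.inr ())
        rw [hrow2] at h
        simp only [hu, Sum.elim_inr] at h
        rw [h]; norm_num
    obtain ⟨y, hy1, hy2⟩ := farkas M u hinf
    set γ : ℝ := y (Sum.inr ()) with hγ
    set q : n → ℝ := fun a => y (Sum.inl a) with hq
    have hγneg : γ < 0 := by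
      have : u ⬝ᵥ y = γ := by
        show ∑ s, u s * y s = γ
        rw [Fintype.sum_sum_type]
        simp [hu, hγ]
      linarith [hy2, this.symm.trans_lt hy2]
    have hqcol : ∀ b, (Mᵀ *ᵥ y) (Sum.inr b) = -(q b) := by
      intro b
      show ∑ r, Mᵀ (Sum.inr b) r * y r = _
      rw [Fintype.sum_sum_type]
      simp only [hM, Matrix.transpose_apply, Matrix.of_apply, hq, neg_mul, ite_mul, one_mul,
        zero_mul, Finset.sum_neg_distrib, Finset.sum_ite_eq', Finset.mem_univ, if_true]
      simp
    have hKcol : ∀ b, (Mᵀ *ᵥ y) (Sum.inl b) = (Kᵀ *ᵥ q) b + (if b = i then (1:ℝ) else 0) * γ := by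
      intro b
      show ∑ r, Mᵀ (Sum.inl b) r * y r = _
      rw [Fintype.sum_sum_type]
      simp only [hM, Matrix.transpose_apply, Matrix.of_apply, hq, hγ]
      rw [show ∑ x : Unit, (if b = i then (1:ℝ) else 0) * y (Sum.inr x)
          = (if b = i then (1:ℝ) else 0) * y (Sum.inr ()) by simp]
      rfl
    refine ⟨-q, fun a => ?_, fun a => ?_, ?_⟩
    · have := hy1 (Sum.inr a); rw [hqcol a] at this
      simpa using this
    · have h := hy1 (Sum.inl a)
      rw [hKcol a, hskew] at h
      rw [Matrix.mulVec_neg]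
      simp only [Matrix.neg_mulVec, Pi.neg_apply] at h ⊢
      by_cases hb : a = i
      · rw [if_pos hb] at h; nlinarith
      · rw [if_neg hb] at h; linarith
    · have h := hy1 (Sum.inl i)
      rw [hKcol i, hskew, if_pos rfl] at h
      simp only [Matrix.neg_mulVec, Pi.neg_apply, one_mul] at h
      have hq0 : 0 ≤ -q i := by
        have := hy1 (Sum.inr i); rw [hqcol i] at this; simpa using this
      rw [Matrix.mulVec_neg]
      simp only [Pi.neg_apply]
      linarith

lemma tucker (K : Matrix n n ℝ) (hskew : Kᵀ = -K) :
    ∃ z : n → ℝ, (∀ a, 0 ≤ z a) ∧ (∀ a, 0 ≤ (K *ᵥ z) a) ∧ ∀ a, 0 < z a + (K *ᵥ z) a := by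
  classical
  choose f h1 h2 h3 using tucker_index K hskew
  have hsum : K *ᵥ (∑ j, f j) = ∑ j, K *ᵥ f j := by
    have h := map_sum K.mulVecLin f Finset.univ
    simp only [Matrix.mulVecLin_apply] at h
    exact h
  have happ : ∀ a, (∑ j, f j) a = ∑ j, f j a := fun a =>
    Finset.sum_apply a Finset.univ f
  have happ2 : ∀ a, (K *ᵥ ∑ j, f j) a = ∑ j, (K *ᵥ f j) a := by
    intro a
    rw [hsum]
    exact Finset.sum_apply a Finset.univ _
  refine ⟨∑ j, f j, fun a => ?_, fun a => ?_, fun a => ?_⟩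
  · rw [happ a]
    exact Finset.sum_nonneg fun j _ => h1 j a
  · rw [happ2 a]
    exact Finset.sum_nonneg fun j _ => h2 j a
  · rw [happ a, happ2 a, ← Finset.sum_add_distrib]
    exact Finset.sum_pos' (fun j _ => add_nonneg (h1 j a) (h2 j a))
      ⟨a, Finset.mem_univ a, h3 a⟩

end Tucker

lemma weak_duality (A : Matrix (Fin m) (Fin d) ℝ) (b : Fin m → ℝ) (c : Fin d → ℝ)
    {x : Fin d → ℝ} (hx : x ∈ feasSet A b) {l : Fin m → ℝ} (hl : l ∈ dualFeasSet A c) :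
    b ⬝ᵥ l ≤ c ⬝ᵥ x := by
  obtain ⟨hAx, hx0⟩ := hx
  rw [← hAx]
  have h1 : (A *ᵥ x) ⬝ᵥ l = x ⬝ᵥ (Aᵀ *ᵥ l) := by
    rw [dotProduct_comm (A *ᵥ x) l, Matrix.dotProduct_mulVec,
      Matrix.mulVec_transpose, dotProduct_comm x]
  rw [h1, dotProduct_comm c x]
  exact Finset.sum_le_sum fun j _ => mul_le_mul_of_nonneg_left (hl j) (hx0 j)


end SCS

/-- Lemma A.1 (strict complementary slackness): if both the primal `(P_b)` and
the dual `(D_b)` have optimal solutions, then there exist a primal optimal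
solution `x*` and a dual optimal solution `λ*` such that for every index `j`,
either `x*_j > 0` or `(Aᵀλ*)_j < c_j`. -/
theorem stmt17 (hm : 1 ≤ m) (hmd : m ≤ d)
    (A : Matrix (Fin m) (Fin d) ℝ) (hA : A.rank = m)
    (b : Fin m → ℝ) (c : Fin d → ℝ)
    (hP : (optSet A b c).Nonempty) (hD : (dualOptSet A b c).Nonempty) :
    ∃ xstar ∈ optSet A b c, ∃ lstar ∈ dualOptSet A b c,
      ∀ j : Fin d, 0 < xstar j ∨ (Aᵀ *ᵥ lstar) j < c j := by
  classical
  obtain ⟨x0, hx0⟩ := hP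
  obtain ⟨l0, hl0⟩ := hD
  set K : Matrix (Fin m ⊕ (Fin m ⊕ (Fin d ⊕ Unit))) (Fin m ⊕ (Fin m ⊕ (Fin d ⊕ Unit))) ℝ :=
    Matrix.of fun r s =>
      match r, s with
      | .inl i, .inr (.inr (.inl j)) => A i j
      | .inl i, .inr (.inr (.inr _)) => -(b i)
      | .inr (.inl i), .inr (.inr (.inl j)) => -(A i j)
      | .inr (.inl i), .inr (.inr (.inr _)) => b i
      | .inr (.inr (.inl j)), .inl i => -(A i j)
      | .inr (.inr (.inl j)), .inr (.inl i) => A i j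
      | .inr (.inr (.inl j)), .inr (.inr (.inr _)) => c j
      | .inr (.inr (.inr _)), .inl i => b i
      | .inr (.inr (.inr _)), .inr (.inl i) => -(b i)
      | .inr (.inr (.inr _)), .inr (.inr (.inl j)) => -(c j)
      | _, _ => 0 with hKdef
  have hskew : Kᵀ = -K := by
    ext r s
    rcases r with i | i | j | _ <;> rcases s with i' | i' | j' | _ <;>
      simp [hKdef, Matrix.transpose_apply, Matrix.neg_apply]
  obtain ⟨z, hz0, hKz0, hzs⟩ := SCS.tucker K hskew
  set p : Fin m → ℝ := fun i => z (.inl i) with hp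
  set q : Fin m → ℝ := fun i => z (.inr (.inl i)) with hq
  set x : Fin d → ℝ := fun j => z (.inr (.inr (.inl j))) with hx
  set τ : ℝ := z (.inr (.inr (.inr ()))) with hτ
  set lam : Fin m → ℝ := fun i => p i - q i with hlam
  have hsumN : ∀ f : (Fin m ⊕ (Fin m ⊕ (Fin d ⊕ Unit))) → ℝ,
      ∑ s, f s = ∑ i, f (.inl i) + (∑ i, f (.inr (.inl i))
        + (∑ j, f (.inr (.inr (.inl j))) + f (.inr (.inr (.inr ()))))) := by
    intro f
    rw [Fintype.sum_sum_type, Fintype.sum_sum_type, Fintype.sum_sum_type]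
    simp
  have hrow1 : ∀ i, (K *ᵥ z) (.inl i) = (∑ j, A i j * x j) - b i * τ := by
    intro i
    show ∑ s, K (.inl i) s * z s = _
    rw [hsumN]
    simp [hKdef, hx, hτ]
    ring
  have hrow2 : ∀ i, (K *ᵥ z) (.inr (.inl i)) = b i * τ - ∑ j, A i j * x j := by
    intro i
    show ∑ s, K (.inr (.inl i)) s * z s = _
    rw [hsumN]
    simp [hKdef, hx, hτ]
    ring
  have hrow3 : ∀ j, (K *ᵥ z) (.inr (.inr (.inl j))) = c j * τ - ∑ i, A i j * lam i := by
    intro j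
    show ∑ s, K (.inr (.inr (.inl j))) s * z s = _
    rw [hsumN]
    simp [hKdef, hlam, hp, hq, hτ, mul_sub, Finset.sum_sub_distrib]
    ring
  have hrow4 : (K *ᵥ z) (.inr (.inr (.inr ()))) =
      (∑ i, b i * lam i) - ∑ j, c j * x j := by
    show ∑ s, K (.inr (.inr (.inr ()))) s * z s = _
    rw [hsumN]
    simp [hKdef, hlam, hp, hq, hx, mul_sub, Finset.sum_sub_distrib]
    ring
  -- key inequalities
  have hAx : ∀ i, ∑ j, A i j * x j = b i * τ := by
    intro i
    have h1 := hKz0 (.inl i); rw [hrow1 i] at h1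
    have h2 := hKz0 (.inr (.inl i)); rw [hrow2 i] at h2
    linarith
  have hdual : ∀ j, ∑ i, A i j * lam i ≤ c j * τ := by
    intro j
    have h := hKz0 (.inr (.inr (.inl j))); rw [hrow3 j] at h
    linarith
  have hgap : ∑ j, c j * x j ≤ ∑ i, b i * lam i := by
    have h := hKz0 (.inr (.inr (.inr ()))); rw [hrow4] at h
    linarith
  have hxnn : ∀ j, 0 ≤ x j := fun j => hz0 _
  have hτnn : 0 ≤ τ := hz0 _
  -- τ > 0
  have hτpos : 0 < τ := by
    rcases hτnn.lt_or_eq with h | h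
    · exact h
    exfalso
    have hτ0 : τ = 0 := h.symm
    have hAx0 : A *ᵥ x = 0 := by
      funext i
      show ∑ j, A i j * x j = 0
      rw [hAx i, hτ0, mul_zero]
    -- x0 + x is feasible
    have hfeas2 : (x0 + x) ∈ feasSet A b := by
      constructor
      · rw [Matrix.mulVec_add, hAx0, hx0.1.1, add_zero]
      · intro j; have := hx0.1.2 j; have := hxnn j
        simp only [Pi.add_apply]; linarith
    have hcx : 0 ≤ ∑ j, c j * x j := by
      have h := hx0.2 _ hfeas2
      have : c ⬝ᵥ (x0 + x) = c ⬝ᵥ x0 + ∑ j, c j * x j := by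
        simp [dotProduct, mul_add, Finset.sum_add_distrib]
      linarith [h.trans_eq this]
    -- l0 + lam is dual feasible
    have hdf2 : (l0 + lam) ∈ dualFeasSet A c := by
      intro j
      have h1 : (Aᵀ *ᵥ (l0 + lam)) j = (Aᵀ *ᵥ l0) j + ∑ i, A i j * lam i := by
        rw [Matrix.mulVec_add]
        simp [Matrix.mulVec, dotProduct, Matrix.transpose_apply]
      have h2 := hdual j
      rw [hτ0, mul_zero] at h2
      have := hl0.1 j
      rw [h1]; linarith
    have hbl : ∑ i, b i * lam i ≤ 0 := by
      have h := hl0.2 _ hdf2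
      have : b ⬝ᵥ (l0 + lam) = b ⬝ᵥ l0 + ∑ i, b i * lam i := by
        simp [dotProduct, mul_add, Finset.sum_add_distrib]
      linarith [this ▸ h]
    have hstrict := hzs (.inr (.inr (.inr ())))
    rw [hrow4] at hstrict
    rw [show z (Sum.inr (Sum.inr (Sum.inr ()))) = τ from rfl] at hstrict
    rw [hτ0] at hstrict
    linarith
  -- the optimal pair
  set xstar : Fin d → ℝ := fun j => x j / τ with hxstar
  set lstar : Fin m → ℝ := fun i => lam i / τ with hlstar
  have hATl : ∀ j, (Aᵀ *ᵥ lstar) j = (∑ i, A i j * lam i) / τ := by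
    intro j
    show ∑ i, Aᵀ j i * (lam i / τ) = _
    rw [Finset.sum_div]
    exact Finset.sum_congr rfl fun i _ => by rw [Matrix.transpose_apply]; ring
  have hxfeas : xstar ∈ feasSet A b := by
    constructor
    · funext i
      show ∑ j, A i j * (x j / τ) = b i
      rw [show ∑ j, A i j * (x j / τ) = (∑ j, A i j * x j) / τ by
        rw [Finset.sum_div]; exact Finset.sum_congr rfl fun j _ => by ring]
      rw [hAx i]
      field_simp
    · intro j; exact div_nonneg (hxnn j) hτnn
  have hlfeas : lstar ∈ dualFeasSet A c := by
    intro j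
    rw [hATl j, div_le_iff₀ hτpos]
    exact hdual j
  have hcx_eq : c ⬝ᵥ xstar = (∑ j, c j * x j) / τ := by
    show ∑ j, c j * (x j / τ) = _
    rw [Finset.sum_div]; exact Finset.sum_congr rfl fun j _ => by ring
  have hbl_eq : b ⬝ᵥ lstar = (∑ i, b i * lam i) / τ := by
    show ∑ i, b i * (lam i / τ) = _
    rw [Finset.sum_div]; exact Finset.sum_congr rfl fun i _ => by ring
  have hge : c ⬝ᵥ xstar ≤ b ⬝ᵥ lstar := by
    rw [hcx_eq, hbl_eq]
    have := mul_le_mul_of_nonneg_right hgap (inv_nonneg.mpr hτnn)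
    simpa [div_eq_mul_inv] using this
  have hle : b ⬝ᵥ lstar ≤ c ⬝ᵥ xstar := SCS.weak_duality A b c hxfeas hlfeas
  have heq : c ⬝ᵥ xstar = b ⬝ᵥ lstar := le_antisymm hge hle
  have hxopt : xstar ∈ optSet A b c := by
    refine ⟨hxfeas, fun y hy => ?_⟩
    rw [heq]
    exact SCS.weak_duality A b c hy hlfeas
  have hlopt : lstar ∈ dualOptSet A b c := by
    refine ⟨hlfeas, fun mu hmu => ?_⟩
    rw [← heq]
    exact SCS.weak_duality A b c hxfeas hmu
  refine ⟨xstar, hxopt, lstar, hlopt, fun j => ?_⟩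
  by_contra hcon
  push_neg at hcon
  obtain ⟨h1, h2⟩ := hcon
  have hstr := hzs (.inr (.inr (.inl j)))
  rw [hrow3 j] at hstr
  rw [show z (Sum.inr (Sum.inr (Sum.inl j))) = x j from rfl] at hstr
  have hxj : x j = τ * xstar j := by
    rw [hxstar]
    field_simp
  have s1 : x j ≤ 0 := by
    rw [hxj]
    exact mul_nonpos_of_nonneg_of_nonpos hτnn h1
  have hA2 : (Aᵀ *ᵥ lstar) j * τ = ∑ i, A i j * lam i := by
    rw [hATl j]
    field_simp
  have s2 : c j * τ ≤ ∑ i, A i j * lam i := by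
    rw [← hA2]
    exact mul_le_mul_of_nonneg_right h2 hτnn
  linarith

end
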